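/- arXiv:0807.0484 — 2 statements merged into one kernel-verified Lean document; each statement's English description precedes it below -/
import Mathlib

section
/- Let u be a finite sequence with exactly r distinct symbols and length s, where s ≥ r ≥ 2. Then for every integer n ≥ 1, Ex_u(n) ≤ F_{r, s−r+1}(n). -/
/-- The alternating list `a b a b ...` of length `l`. -/
def altList (a b : ℕ) : ℕ → List ℕ
  | 0 => []
  | l + 1 => a :: altList b a l

/-- `S` contains an alternation of length `l`: two distinct symbols occur as an
alternating (not necessarily contiguous) subsequence of length `l`. -/
def HasAlt (S : List ℕ) (l : ℕ) : Prop :=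
  ∃ a b : ℕ, a ≠ b ∧ (altList a b l).Sublist S

/-- A Davenport–Schinzel sequence of order `s`: no two adjacent equal entries and
no alternation of length `s + 2`. -/
def IsDS (s : ℕ) (S : List ℕ) : Prop :=
  List.Chain' (· ≠ ·) S ∧ ¬ HasAlt S (s + 2)

/-- `S` can be partitioned into at most `m` contiguous blocks, each consisting of
pairwise distinct symbols. -/
def HasBlocks (S : List ℕ) (m : ℕ) : Prop :=
  ∃ Bs : List (List ℕ), Bs.length ≤ m ∧ S = Bs.flatten ∧ ∀ B ∈ Bs, B.Nodup

/-- `λ_s(n)`: maximum length of a Davenport–Schinzel sequence of order `s`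
using at most `n` distinct symbols. -/
noncomputable def lambdaDS (s n : ℕ) : ℕ :=
  sSup {L | ∃ S : List ℕ, IsDS s S ∧ S.toFinset.card ≤ n ∧ S.length = L}

/-- `ψ_s(m,n)`: maximum length of a Davenport–Schinzel sequence of order `s` on at
most `n` distinct symbols partitionable into at most `m` blocks of distinct symbols. -/
noncomputable def psiDS (s m n : ℕ) : ℕ :=
  sSup {L | ∃ S : List ℕ, IsDS s S ∧ S.toFinset.card ≤ n ∧ HasBlocks S m ∧ S.length = L}

/-- The Ackermann hierarchy: `A_1(n) = 2n`, and `A_k(n) = A_{k-1}^{(n)}(1)` for `k ≥ 2`. -/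
def Ak : ℕ → ℕ → ℕ
  | 0, n => n + 1
  | 1, n => 2 * n
  | k + 2, n => (Ak (k + 1))^[n] 1

/-- The Ackermann function `A(n) = A_n(3)`. -/
def AckF (n : ℕ) : ℕ := Ak n 3

/-- `α_k(x) = min {n | A_k(n) ≥ x}`. -/
noncomputable def invAk (k x : ℕ) : ℕ := sInf {n | x ≤ Ak k n}

/-- `α(x) = min {n | A(n) ≥ x}`. -/
noncomputable def invA (x : ℕ) : ℕ := sInf {n | x ≤ AckF n}

/-- An `ADS^s_k(m)`-sequence: at most `m` blocks of distinct symbols, every occurring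
symbol appears at least `k` times, and no alternation of length `s + 2`. -/
def IsADS (s k m : ℕ) (S : List ℕ) : Prop :=
  HasBlocks S m ∧ (∀ a ∈ S, k ≤ S.count a) ∧ ¬ HasAlt S (s + 2)

/-- `N^s_k(m)`: the supremum (possibly infinite) of the number of distinct symbols
in an `ADS^s_k(m)`-sequence. -/
noncomputable def NADS (s k m : ℕ) : ℕ∞ :=
  sSup {c : ℕ∞ | ∃ S : List ℕ, IsADS s k m S ∧ c = (S.toFinset.card : ℕ∞)}

/-- `S` is `r`-sparse: any at most `r` consecutive entries are pairwise distinct. -/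
def Sparse (r : ℕ) (S : List ℕ) : Prop :=
  ∀ l : List ℕ, l <:+: S → l.length ≤ r → l.Nodup

/-- `S` contains the pattern `u`: some subsequence of `S` is an injectively renamed
copy of `u`. -/
def ContainsPat (S u : List ℕ) : Prop :=
  ∃ f : ℕ → ℕ, Set.InjOn f {a | a ∈ u} ∧ (u.map f).Sublist S

/-- `Ex_u(n)`: maximum length of an `r`-sparse `u`-free sequence on at most `n`
distinct symbols, where `r` is the number of distinct symbols of `u`. -/
noncomputable def ExDS (u : List ℕ) (n : ℕ) : ℕ :=
  sSup {L | ∃ S : List ℕ, Sparse u.toFinset.card S ∧ ¬ ContainsPat S u ∧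
    S.toFinset.card ≤ n ∧ S.length = L}

/-- An `(r,s)`-formation: a concatenation of `s` permutations of a single set of
`r` distinct symbols. -/
def IsFormation (r s : ℕ) (F : List ℕ) : Prop :=
  ∃ A : Finset ℕ, A.card = r ∧ ∃ Bs : List (List ℕ), Bs.length = s ∧
    (∀ B ∈ Bs, B.Nodup ∧ B.toFinset = A) ∧ F = Bs.flatten

/-- An `(r,s)`-formation-free sequence: `r`-sparse and containing no
`(r,s)`-formation as a subsequence. -/
def FormationFree (r s : ℕ) (S : List ℕ) : Prop :=
  Sparse r S ∧ ¬ ∃ F : List ℕ, IsFormation r s F ∧ F.Sublist S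

/-- `F_{r,s}(n)`: maximum length of an `(r,s)`-formation-free sequence on at most
`n` distinct symbols. -/
noncomputable def FDS (r s n : ℕ) : ℕ :=
  sSup {L | ∃ S : List ℕ, FormationFree r s S ∧ S.toFinset.card ≤ n ∧ S.length = L}

lemma myFlattenSub {l₁ l₂ : List (List ℕ)} (h : List.Forall₂ List.Sublist l₁ l₂) :
    l₁.flatten.Sublist l₂.flatten := by
  induction h with
  | nil => simp
  | cons h _ ih => simpa using h.append ih

lemma myEraseToFinset {l : List ℕ} (hl : l.Nodup) (c : ℕ) :
    (l.erase c).toFinset = l.toFinset.erase c := by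
  ext a
  simp [hl.mem_erase_iff, Finset.mem_erase, and_comm]

lemma myEraseGetLast {l : List ℕ} (hl : l.Nodup) (h : l ≠ []) :
    l.erase (l.getLast h) ++ [l.getLast h] = l := by
  obtain ⟨c, hc⟩ : ∃ c, l.getLast h = c := ⟨_, rfl⟩
  have hd : l.dropLast ++ [c] = l := hc ▸ List.dropLast_append_getLast h
  have hnm : c ∉ l.dropLast := by
    have := hl
    rw [← hd, List.nodup_append] at this
    exact fun hm => this.2.2 c hm c (by simp) rfl
  rw [hc, ← hd, List.erase_append_right _ hnm]
  simp

lemma myFormationContains : ∀ s : ℕ, ∀ (u : List ℕ) (r : ℕ) (F : List ℕ),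
    u.length = s → u.toFinset.card = r → 1 ≤ r → r ≤ s →
    IsFormation r (s - r + 1) F →
    ∃ f : ℕ → ℕ, Set.InjOn f {a | a ∈ u} ∧ (u.map f).Sublist F := by
  intro s
  induction s with
  | zero => intro u r F _ _ hr1 hrs _; omega
  | succ s ih =>
    intro u r F hlen hcard hr1 hrs hform
    obtain ⟨A, hA, Bs, hBslen, hBs, rfl⟩ := hform
    obtain ⟨u', x, rfl⟩ : ∃ u' x, u = u' ++ [x] := by
      rcases u.eq_nil_or_concat with h | ⟨L, b, h⟩
      · rw [h] at hlen; simp at hlen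
      · exact ⟨L, b, by simpa [List.concat_eq_append] using h⟩
    have hlen' : u'.length = s := by
      simp only [List.length_append, List.length_singleton] at hlen; omega
    by_cases hx : x ∈ u'
    · -- last symbol occurs earlier
      have htf : (u' ++ [x]).toFinset = u'.toFinset := by
        ext a
        simp only [List.toFinset_append, Finset.mem_union, List.mem_toFinset,
          List.toFinset_cons, List.toFinset_nil, insert_empty_eq, Finset.mem_singleton]
        constructor
        · rintro (h | rfl)
          · exact h
          · exact hx
        · exact Or.inl
      have hcard' : u'.toFinset.card = r := by rw [htf] at hcard; exact hcard
      have hrs' : r ≤ s := by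
        have := u'.toFinset_card_le
        omega
      rcases Bs.eq_nil_or_concat with hB | ⟨Bs', Bl, hB⟩
      · rw [hB] at hBslen; simp at hBslen
      · rw [List.concat_eq_append] at hB
        subst hB
        have hlen'' : Bs'.length = s - r + 1 := by
          simp only [List.length_append, List.length_singleton] at hBslen; omega
        have hform' : IsFormation r (s - r + 1) Bs'.flatten :=
          ⟨A, hA, Bs', hlen'', fun B hBm => hBs B (List.mem_append_left _ hBm), rfl⟩
        obtain ⟨f, hinj, hsub⟩ := ih u' r Bs'.flatten hlen' hcard' hr1 hrs' hform'
        have hset : {a | a ∈ u' ++ [x]} = {a | a ∈ u'} := by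
          ext a
          simp only [Set.mem_setOf_eq, List.mem_append, List.mem_singleton]
          constructor
          · rintro (h | rfl)
            · exact h
            · exact hx
          · exact Or.inl
        refine ⟨f, by rw [hset]; exact hinj, ?_⟩
        have hfx : f x ∈ Bl := by
          have h1 : f x ∈ u'.map f := List.mem_map_of_mem (f := f) hx
          have h2 : f x ∈ Bs'.flatten := hsub.subset h1
          obtain ⟨B, hBm, hxB⟩ := List.mem_flatten.mp h2
          have hB1 := (hBs B (List.mem_append_left _ hBm)).2
          have hB2 := (hBs Bl (by simp)).2
          have : f x ∈ A := by rw [← hB1]; simpa using hxB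
          rw [← hB2] at this
          simpa using this
        have e1 : ((u' ++ [x]).map f) = u'.map f ++ [f x] := by simp
        have e2 : (Bs' ++ [Bl]).flatten = Bs'.flatten ++ Bl := by simp
        rw [e1, e2]
        exact hsub.append (List.singleton_sublist.mpr hfx)
    · -- last symbol is new
      by_cases hu' : u' = []
      · -- u = [x]
        subst hu'
        have hBsne : Bs ≠ [] := by
          intro h; rw [h] at hBslen; simp at hBslen
        obtain ⟨B, Bs2, rfl⟩ := List.exists_cons_of_ne_nil hBsne
        have hBp := hBs B (by simp)
        have hBne : B ≠ [] := by
          intro h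
          rw [h] at hBp
          have hA0 : A.card = 0 := by rw [← hBp.2]; simp
          omega
        obtain ⟨c, hc⟩ := List.exists_mem_of_ne_nil B hBne
        refine ⟨fun _ => c, ?_, ?_⟩
        · intro a ha b hb _
          simp only [List.nil_append, Set.mem_setOf_eq, List.mem_singleton] at ha hb
          rw [ha, hb]
        · simp only [List.nil_append, List.map_cons, List.map_nil]
          exact List.singleton_sublist.mpr (List.mem_flatten.mpr ⟨B, by simp, hc⟩)
      · -- u' nonempty, x brand new
        have hins : (u' ++ [x]).toFinset = insert x u'.toFinset := by
          ext a
          simp only [List.toFinset_append, Finset.mem_union, List.mem_toFinset,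
            List.toFinset_cons, List.toFinset_nil, insert_empty_eq, Finset.mem_singleton,
            Finset.mem_insert]
          tauto
        have hxnot : x ∉ u'.toFinset := by simpa using hx
        have hcard1 : u'.toFinset.card + 1 = r := by
          rw [hins, Finset.card_insert_of_notMem hxnot] at hcard
          omega
        obtain ⟨a0, ha0⟩ := List.exists_mem_of_ne_nil u' hu'
        have hposcard : 0 < u'.toFinset.card :=
          Finset.card_pos.mpr ⟨a0, List.mem_toFinset.mpr ha0⟩
        have hr2 : 2 ≤ r := by omega
        rcases Bs.eq_nil_or_concat with hB | ⟨Bs0, Bl, hB⟩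
        · rw [hB] at hBslen; simp at hBslen
        rw [List.concat_eq_append] at hB
        subst hB
        have hBl := hBs Bl (by simp)
        have hBlne : Bl ≠ [] := by
          intro h
          rw [h] at hBl
          have hA0 : A.card = 0 := by rw [← hBl.2]; simp
          omega
        set c := Bl.getLast hBlne with hcdef
        have hcA : c ∈ A := by
          rw [← hBl.2]
          exact List.mem_toFinset.mpr (List.getLast_mem hBlne)
        set Bs'' := (Bs0 ++ [Bl]).map (fun B => B.erase c) with hBs''
        have hform'' : IsFormation (r - 1) (s - (r - 1) + 1) Bs''.flatten := by
          refine ⟨A.erase c, ?_, Bs'', ?_, ?_, rfl⟩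
          · rw [Finset.card_erase_of_mem hcA, hA]
          · rw [hBs'', List.length_map]
            simp only [List.length_append, List.length_singleton] at hBslen ⊢
            omega
          · intro B' hB'
            obtain ⟨B, hBm, rfl⟩ := List.mem_map.mp hB'
            have hBp := hBs B hBm
            exact ⟨hBp.1.erase c, by rw [myEraseToFinset hBp.1 c, hBp.2]⟩
        obtain ⟨f, hinj, hsub⟩ := ih u' (r - 1) Bs''.flatten hlen'
          (by omega) (by omega) (by omega) hform''
        have hfc : ∀ a ∈ u', f a ≠ c := by
          intro a ha
          have h1 : f a ∈ Bs''.flatten := hsub.subset (List.mem_map_of_mem (f := f) ha)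
          obtain ⟨B', hB'm, hfB'⟩ := List.mem_flatten.mp h1
          rw [hBs''] at hB'm
          obtain ⟨B, hBm, rfl⟩ := List.mem_map.mp hB'm
          exact ((hBs B hBm).1.mem_erase_iff.mp hfB').1
        refine ⟨Function.update f x c, ?_, ?_⟩
        · intro a ha b hb hab
          simp only [Set.mem_setOf_eq, List.mem_append, List.mem_singleton] at ha hb
          have key : ∀ y, y ∈ u' → Function.update f x c y = f y := fun y hy =>
            Function.update_of_ne (fun h => hx (by rw [← h]; exact hy)) _ _
          rcases ha with ha | ha <;> rcases hb with hb | hb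
          · rw [key a ha, key b hb] at hab
            exact hinj ha hb hab
          · rw [key a ha, hb, Function.update_self] at hab
            exact absurd hab (hfc a ha)
          · rw [key b hb, ha, Function.update_self] at hab
            exact absurd hab.symm (hfc b hb)
          · rw [ha, hb]
        · have e1 : (u' ++ [x]).map (Function.update f x c) = u'.map f ++ [c] := by
            rw [List.map_append]
            congr 1
            · apply List.map_congr_left
              intro a ha
              exact Function.update_of_ne (fun h => hx (by rw [← h]; exact ha)) _ _
            · simp
          rw [e1]
          set G1 := (Bs0.map (fun B => B.erase c)).flatten with hG1
          have e2 : Bs''.flatten = G1 ++ Bl.erase c := by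
            rw [hBs'', List.map_append, List.flatten_append]
            simp [hG1]
          rw [e2] at hsub
          have step1 : (u'.map f ++ [c]).Sublist ((G1 ++ Bl.erase c) ++ [c]) :=
            hsub.append (List.Sublist.refl [c])
          have step2 : (G1 ++ Bl.erase c) ++ [c] = G1 ++ Bl := by
            rw [List.append_assoc, myEraseGetLast hBl.1 hBlne]
          have hG1sub : G1.Sublist Bs0.flatten := by
            apply myFlattenSub
            rw [List.forall₂_map_left_iff]
            exact List.forall₂_same.mpr fun B _ => List.erase_sublist (a := c) (l := B)
          have step3 : (G1 ++ Bl).Sublist ((Bs0 ++ [Bl]).flatten) := by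
            have e3 : (Bs0 ++ [Bl]).flatten = Bs0.flatten ++ Bl := by simp
            rw [e3]
            exact hG1sub.append (List.Sublist.refl Bl)
          exact (step2 ▸ step1).trans step3

lemma myBlocksSublist (S : List ℕ) (r : ℕ) :
    ∀ (idx : List ℕ) (m : ℕ), idx.Pairwise (· < ·) → (∀ j ∈ idx, m ≤ j * r) →
    ((idx.map (fun i => (S.drop (i * r)).take r)).flatten).Sublist (S.drop m) := by
  intro idx
  induction idx with
  | nil => intro m _ _; simp
  | cons i rest ih =>
    intro m hpw hm
    have h1 : ((rest.map (fun i => (S.drop (i * r)).take r)).flatten).Sublist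
        (S.drop (i * r + r)) := by
      apply ih
      · exact hpw.of_cons
      · intro j hj
        have hij : i < j := (List.pairwise_cons.mp hpw).1 j hj
        have h' : (i + 1) * r ≤ j * r := Nat.mul_le_mul_right r hij
        have h'' : (i + 1) * r = i * r + r := by ring
        omega
    have h2 : (S.drop (i * r)).take r ++ S.drop (i * r + r) = S.drop (i * r) := by
      have := List.drop_drop (i := r) (j := i * r) (l := S)
      rw [← this]
      exact List.take_append_drop r _
    simp only [List.map_cons, List.flatten_cons]
    have h3 : ((S.drop (i * r)).take r ++
        (rest.map (fun i => (S.drop (i * r)).take r)).flatten).Sublist (S.drop (i * r)) := by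
      have h3' := h1.append_left ((S.drop (i * r)).take r)
      rwa [h2] at h3'
    have h4 : (S.drop (i * r)).Sublist (S.drop m) := by
      have he : S.drop (i * r) = (S.drop m).drop (i * r - m) := by
        rw [List.drop_drop]
        congr 1
        have := hm i (by simp)
        omega
      rw [he]
      exact List.drop_sublist _ _
    exact h3.trans h4

lemma myFormationFreeLen {r s' n : ℕ} (hr : 1 ≤ r) (hs' : 1 ≤ s') (S : List ℕ)
    (hS : FormationFree r s' S) (hcard : S.toFinset.card ≤ n) :
    S.length ≤ r * (s' * 2 ^ n + 1) := by
  by_contra hlen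
  push_neg at hlen
  set k := s' * 2 ^ n + 1 with hk
  set φ : ℕ → Finset ℕ := fun i => ((S.drop (i * r)).take r).toFinset with hφ
  have hblock : ∀ i < k, ((S.drop (i * r)).take r).Nodup ∧
      ((S.drop (i * r)).take r).length = r := by
    intro i hik
    have hlen2 : i * r + r ≤ S.length := by
      have h1 : (i + 1) * r ≤ k * r := Nat.mul_le_mul_right r hik
      have h2 : (i + 1) * r = i * r + r := by ring
      have h3 : k * r = r * k := by ring
      omega
    constructor
    · apply hS.1
      · exact ((List.take_prefix r _).isInfix).trans ((List.drop_suffix (i * r) S).isInfix)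
      · exact List.length_take_le r _
    · rw [List.length_take, List.length_drop]; omega
  have hmaps : ∀ i ∈ Finset.range k, φ i ∈ S.toFinset.powerset := by
    intro i _
    rw [Finset.mem_powerset]
    intro a ha
    simp only [hφ, List.mem_toFinset] at ha
    exact List.mem_toFinset.mpr
      (((List.take_sublist _ _).trans (List.drop_sublist _ _)).subset ha)
  have hlt : S.toFinset.powerset.card * s' < (Finset.range k).card := by
    rw [Finset.card_powerset, Finset.card_range]
    have h2 : 2 ^ S.toFinset.card ≤ 2 ^ n := Nat.pow_le_pow_right (by norm_num) hcard
    have h3 : 2 ^ S.toFinset.card * s' ≤ 2 ^ n * s' := Nat.mul_le_mul_right _ h2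
    have h4 : 2 ^ n * s' = s' * 2 ^ n := by ring
    omega
  obtain ⟨A, _, hAfib⟩ := Finset.exists_lt_card_fiber_of_mul_lt_card_of_maps_to hmaps hlt
  set fib := Finset.filter (fun i => φ i = A) (Finset.range k) with hfib
  set idx := (fib.sort (· ≤ ·)).take s' with hidx
  have hidxlen : idx.length = s' := by
    rw [hidx, List.length_take, Finset.length_sort]
    omega
  have hidxmem : ∀ j ∈ idx, j ∈ fib := fun j hj =>
    (Finset.mem_sort _).mp ((List.take_sublist _ _).subset hj)
  have hidxpw : idx.Pairwise (· < ·) :=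
    List.Pairwise.sublist (List.take_sublist _ _) (Finset.sortedLT_sort fib).pairwise
  set Bs := idx.map (fun i => (S.drop (i * r)).take r) with hBsdef
  apply hS.2
  refine ⟨Bs.flatten, ⟨A, ?_, Bs, ?_, ?_, rfl⟩, ?_⟩
  · have hfibne : fib.Nonempty := Finset.card_pos.mp (by omega)
    obtain ⟨i, hi⟩ := hfibne
    rw [hfib, Finset.mem_filter, Finset.mem_range] at hi
    have hb := hblock i hi.1
    rw [← hi.2]
    simp only [hφ]
    rw [List.toFinset_card_of_nodup hb.1, hb.2]
  · rw [hBsdef, List.length_map, hidxlen]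
  · intro B hB
    obtain ⟨i, hi, rfl⟩ := List.mem_map.mp hB
    have hif := hidxmem i hi
    rw [hfib, Finset.mem_filter, Finset.mem_range] at hif
    exact ⟨(hblock i hif.1).1, hif.2⟩
  · have := myBlocksSublist S r idx 0 hidxpw (fun j _ => Nat.zero_le _)
    simpa using this

/-- If `u` has exactly `r` distinct symbols and length `s` with `s ≥ r ≥ 2`, then
`Ex_u(n) ≤ F_{r, s−r+1}(n)` for every `n ≥ 1`. -/
theorem Ex_le_F :
    ∀ (u : List ℕ) (r s : ℕ), u.toFinset.card = r → u.length = s → 2 ≤ r → r ≤ s →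
      ∀ n : ℕ, 1 ≤ n → ExDS u n ≤ FDS r (s - r + 1) n := by
  intro u r s hr hs hr2 hrs n _
  have hsub : {L | ∃ S : List ℕ, Sparse u.toFinset.card S ∧ ¬ ContainsPat S u ∧
      S.toFinset.card ≤ n ∧ S.length = L} ⊆
      {L | ∃ S : List ℕ, FormationFree r (s - r + 1) S ∧ S.toFinset.card ≤ n ∧
        S.length = L} := by
    rintro L ⟨S, hsp, hfree, hc, hL⟩
    refine ⟨S, ⟨by rwa [hr] at hsp, ?_⟩, hc, hL⟩
    rintro ⟨F, hform, hFS⟩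
    obtain ⟨f, hinj, hmsub⟩ := myFormationContains s u r F hs hr (by omega) hrs hform
    exact hfree ⟨f, hinj, hmsub.trans hFS⟩
  have hbdd : BddAbove {L | ∃ S : List ℕ, FormationFree r (s - r + 1) S ∧
      S.toFinset.card ≤ n ∧ S.length = L} := by
    refine ⟨r * ((s - r + 1) * 2 ^ n + 1), ?_⟩
    rintro L ⟨S, hF, hc, rfl⟩
    exact myFormationFreeLen (by omega) (by omega) S hF hc
  have hne : {L | ∃ S : List ℕ, Sparse u.toFinset.card S ∧ ¬ ContainsPat S u ∧
      S.toFinset.card ≤ n ∧ S.length = L}.Nonempty := by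
    refine ⟨0, [], ?_, ?_, by simp, rfl⟩
    · intro l hl _
      rw [List.infix_nil] at hl
      rw [hl]
      exact List.nodup_nil
    · rintro ⟨f, _, hms⟩
      have h0 := List.sublist_nil.mp hms
      have hu0 : u = [] := List.map_eq_nil_iff.mp h0
      rw [hu0] at hs
      simp at hs
      omega
  unfold ExDS FDS
  exact csSup_le_csSup hbdd hne hsub
end

section
/- For all integers n ≥ 1 and ℓ with 1 ≤ ℓ ≤ n, λ_3(n) ≤ ψ_3(⌈2n/ℓ⌉, n) + 3·n·ℓ. -/
namespace DS3proof

/-- symbol at position `i` -/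
def d (S : List ℕ) (i : ℕ) : ℕ := S.getD i 0

/-- position `i` is a first or last occurrence of its symbol -/
def special (S : List ℕ) (i : ℕ) : Prop :=
  i < S.length ∧ ((∀ j < i, d S j ≠ d S i) ∨ (∀ j < S.length, i < j → d S j ≠ d S i))

instance (S : List ℕ) : DecidablePred (special S) := fun _ => by
  unfold special; infer_instance

def Specials (S : List ℕ) : Finset ℕ := (Finset.range S.length).filter (special S)

def cnt (S : List ℕ) (i : ℕ) : ℕ := ((Finset.range (i+1)).filter (special S)).card

def g (S : List ℕ) (ℓ i : ℕ) : ℕ := (cnt S i - 1) / ℓ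

def keepA (S : List ℕ) (ℓ i : ℕ) : Prop :=
  ∀ j < i, g S ℓ j = g S ℓ i → d S j ≠ d S i

instance (S : List ℕ) (ℓ : ℕ) : DecidablePred (keepA S ℓ) := fun _ => by
  unfold keepA; infer_instance

def lastS (S : List ℕ) (ℓ : ℕ) : ℕ → Option ℕ
  | 0 => none
  | (i+1) => if keepA S ℓ i ∧ lastS S ℓ i ≠ some (d S i) then some (d S i) else lastS S ℓ i

def keepP (S : List ℕ) (ℓ i : ℕ) : Prop :=
  keepA S ℓ i ∧ lastS S ℓ i ≠ some (d S i)

instance (S : List ℕ) (ℓ : ℕ) : DecidablePred (keepP S ℓ) := fun _ => by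
  unfold keepP; infer_instance

def idxs (S : List ℕ) (ℓ : ℕ) : List ℕ :=
  (List.range S.length).filter (fun i => decide (keepP S ℓ i))

def S' (S : List ℕ) (ℓ : ℕ) : List ℕ := (idxs S ℓ).map (d S)

def SpecI (S : List ℕ) (ℓ k : ℕ) : Finset ℕ := (Specials S).filter (fun p => g S ℓ p = k)

section basic
variable {S : List ℕ} {ℓ : ℕ}

lemma d_eq_get {i : ℕ} (h : i < S.length) : d S i = S.get ⟨i, h⟩ := by
  simp [d, List.getD_eq_getElem?_getD, List.getElem?_eq_getElem h]

lemma range_map_d (S : List ℕ) : (List.range S.length).map (d S) = S := by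
  apply List.ext_getElem
  · simp
  · intro i h1 h2
    simp only [List.getElem_map, List.getElem_range]
    rw [d_eq_get (by simpa using h2)]
    simp

lemma mem_d {i : ℕ} (h : i < S.length) : d S i ∈ S := by
  rw [d_eq_get h]; exact List.get_mem S ⟨i, h⟩

lemma special_zero (h : 0 < S.length) : special S 0 :=
  ⟨h, Or.inl (by intro j hj; omega)⟩

lemma cnt_mono : Monotone (cnt S) := by
  intro i j hij
  apply Finset.card_le_card
  apply Finset.filter_subset_filter
  intro x hx
  simp only [Finset.mem_range] at *
  omega

lemma cnt_pos (h : 0 < S.length) (i : ℕ) : 1 ≤ cnt S i := by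
  rw [Nat.one_le_iff_ne_zero, ← Nat.pos_iff_ne_zero]
  apply Finset.card_pos.2
  exact ⟨0, Finset.mem_filter.2 ⟨Finset.mem_range.2 (by omega), special_zero h⟩⟩

lemma cnt_strict {p p' : ℕ} (h : p < p') (hs : special S p') : cnt S p < cnt S p' := by
  apply Finset.card_lt_card
  constructor
  · apply Finset.filter_subset_filter
    intro x hx; simp only [Finset.mem_range] at *; omega
  · intro hsub
    have : p' ∈ (Finset.range (p'+1)).filter (special S) :=
      Finset.mem_filter.2 ⟨Finset.mem_range.2 (by omega), hs⟩
    have := hsub this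
    simp only [Finset.mem_filter, Finset.mem_range] at this
    omega

lemma cnt_le_T (i : ℕ) : cnt S i ≤ (Specials S).card := by
  apply Finset.card_le_card
  intro x hx
  simp only [Finset.mem_filter, Finset.mem_range, Specials] at *
  exact ⟨hx.2.1, hx.2⟩

lemma g_mono {i j : ℕ} (h : i ≤ j) : g S ℓ i ≤ g S ℓ j :=
  Nat.div_le_div_right (by have := cnt_mono (S := S) h; omega)

lemma g_squeeze {q p i : ℕ} (h1 : q ≤ p) (h2 : p ≤ i) (h : g S ℓ q = g S ℓ i) :
    g S ℓ p = g S ℓ i := le_antisymm (g_mono h2) (h ▸ g_mono h1)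

lemma mem_Specials {p : ℕ} : p ∈ Specials S ↔ special S p := by
  simp only [Specials, Finset.mem_filter, Finset.mem_range]
  exact ⟨fun h => h.2, fun h => ⟨h.1, h⟩⟩

lemma SpecI_card (hℓ : 1 ≤ ℓ) (k : ℕ) : (SpecI S ℓ k).card ≤ ℓ := by
  have : (SpecI S ℓ k).card ≤ (Finset.Icc (k*ℓ+1) (k*ℓ+ℓ)).card := by
    apply Finset.card_le_card_of_injOn (cnt S)
    · intro p hp
      simp only [SpecI, Finset.mem_coe, Finset.mem_filter] at hp ⊢
      obtain ⟨hps, hg⟩ := hp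
      rw [mem_Specials] at hps
      have h1 : 1 ≤ cnt S p := cnt_pos (lt_of_le_of_lt (Nat.zero_le p) hps.1) p
      rw [Finset.mem_Icc]
      have hg' : (cnt S p - 1) / ℓ = k := hg
      have hdm := Nat.div_add_mod (cnt S p - 1) ℓ
      have hm : (cnt S p - 1) % ℓ < ℓ := Nat.mod_lt _ (by omega)
      rw [hg'] at hdm
      have hc : ℓ * k = k * ℓ := Nat.mul_comm _ _
      omega
    · intro a ha b hb hab
      simp only [SpecI, Finset.mem_coe, Finset.mem_filter, Finset.coe_filter, Set.mem_setOf_eq] at ha hb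
      have ha' := (mem_Specials).1 ha.1
      have hb' := (mem_Specials).1 hb.1
      rcases lt_trichotomy a b with h | h | h
      · exact absurd hab (Nat.ne_of_lt (cnt_strict h hb'))
      · exact h
      · exact absurd hab.symm (Nat.ne_of_lt (cnt_strict h ha'))
  simpa using this

end basic

section ds
variable {S : List ℕ} {ℓ : ℕ}

lemma T_le (S : List ℕ) : (Specials S).card ≤ 2 * S.toFinset.card := by
  classical
  set Fi : Finset ℕ := (Finset.range S.length).filter
    (fun i => ∀ j < i, d S j ≠ d S i) with hFi
  set La : Finset ℕ := (Finset.range S.length).filter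
    (fun i => ∀ j < S.length, i < j → d S j ≠ d S i) with hLa
  have hsub : Specials S ⊆ Fi ∪ La := by
    intro p hp
    rw [mem_Specials] at hp
    obtain ⟨hlen, h | h⟩ := hp
    · exact Finset.mem_union_left _ (Finset.mem_filter.2 ⟨Finset.mem_range.2 hlen, h⟩)
    · exact Finset.mem_union_right _ (Finset.mem_filter.2 ⟨Finset.mem_range.2 hlen, h⟩)
  have hFc : Fi.card ≤ S.toFinset.card := by
    apply Finset.card_le_card_of_injOn (d S)
    · intro a ha
      simp only [hFi, Finset.mem_coe, Finset.mem_filter, Finset.mem_range] at ha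
      exact List.mem_toFinset.2 (mem_d ha.1)
    · intro a ha b hb hab
      simp only [hFi, Finset.mem_coe, Finset.mem_filter, Finset.coe_filter, Set.mem_setOf_eq, Finset.mem_range] at ha hb
      rcases lt_trichotomy a b with h | h | h
      · exact absurd hab (hb.2 a h)
      · exact h
      · exact absurd hab.symm (ha.2 b h)
  have hLc : La.card ≤ S.toFinset.card := by
    apply Finset.card_le_card_of_injOn (d S)
    · intro a ha
      simp only [hLa, Finset.mem_coe, Finset.mem_filter, Finset.mem_range] at ha
      exact List.mem_toFinset.2 (mem_d ha.1)
    · intro a ha b hb hab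
      simp only [hLa, Finset.mem_coe, Finset.mem_filter, Finset.coe_filter, Set.mem_setOf_eq, Finset.mem_range] at ha hb
      rcases lt_trichotomy a b with h | h | h
      · exact absurd hab.symm (ha.2 b hb.1 h)
      · exact h
      · exact absurd hab (hb.2 a ha.1 h)
  calc (Specials S).card ≤ (Fi ∪ La).card := Finset.card_le_card hsub
    _ ≤ Fi.card + La.card := Finset.card_union_le _ _
    _ ≤ 2 * S.toFinset.card := by omega

/-- the greatest special position `≤ x` has the same `cnt` as `x`. -/
lemma exists_special_le (hx : x < S.length) :
    ∃ p, p ≤ x ∧ special S p ∧ cnt S p = cnt S x := by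
  have h0 : 0 < S.length := lt_of_le_of_lt (Nat.zero_le x) hx
  set s : Finset ℕ := (Specials S).filter (· ≤ x) with hs
  have hne : s.Nonempty := ⟨0, Finset.mem_filter.2 ⟨mem_Specials.2 (special_zero h0), Nat.zero_le x⟩⟩
  set p := s.max' hne with hp
  have hmem := Finset.mem_filter.1 (s.max'_mem hne)
  refine ⟨p, hmem.2, mem_Specials.1 hmem.1, ?_⟩
  unfold cnt
  congr 1
  apply Finset.ext
  intro y
  simp only [Finset.mem_filter, Finset.mem_range]
  constructor
  · intro hy
    exact ⟨by omega, hy.2⟩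
  · intro hy
    refine ⟨?_, hy.2⟩
    have : y ∈ s := Finset.mem_filter.2 ⟨mem_Specials.2 hy.2, by omega⟩
    have := Finset.le_max' s y this
    omega

lemma adj_ne (hch : List.Chain' (· ≠ ·) S) {i : ℕ} (h : i + 1 < S.length) :
    d S i ≠ d S (i+1) := by
  replace hch := List.isChain_iff_getElem.1 hch
  have := hch i (by omega)
  rw [d_eq_get (by omega), d_eq_get h]
  exact this

lemma sublist5 {a b c e f : ℕ} (h1 : a < b) (h2 : b < c) (h3 : c < e) (h4 : e < f)
    (h5 : f < S.length) : List.Sublist [d S a, d S b, d S c, d S e, d S f] S := by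
  have ha : a < S.length := by omega
  have hb : b < S.length := by omega
  have hc : c < S.length := by omega
  have he : e < S.length := by omega
  have hsub := List.map_getElem_sublist (l := S)
    (is := [⟨a, ha⟩, ⟨b, hb⟩, ⟨c, hc⟩, ⟨e, he⟩, ⟨f, h5⟩]) (by
      simp [List.pairwise_cons]
      omega)
  simpa [d_eq_get, ha, hb, hc, he, h5] using hsub

/-- Key lemma: between two globally-consecutive occurrences of a symbol there is a
special position, whose symbol is that of the successor of the left occurrence. -/
lemma exists_special_between (hch : List.Chain' (· ≠ ·) S) (halt : ¬ HasAlt S 5)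
    {q q' : ℕ} (hq : q < q') (hq' : q' < S.length) (hsym : d S q = d S q') :
    ∃ p, q < p ∧ p < q' ∧ special S p ∧ d S p = d S (q+1) := by
  have hq1 : q + 1 < q' := by
    rcases Nat.lt_or_ge (q+1) q' with h | h
    · exact h
    · exfalso
      have : q + 1 = q' := by omega
      exact adj_ne hch (this ▸ hq') (this ▸ hsym)
  have hq1len : q + 1 < S.length := by omega
  set b := d S (q+1) with hb
  have hbx : b ≠ d S q := (adj_ne hch hq1len).symm
  by_cases hfirst : ∀ j < q + 1, d S j ≠ b
  · exact ⟨q+1, by omega, hq1, ⟨hq1len, Or.inl hfirst⟩, rfl⟩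
  · push_neg at hfirst
    obtain ⟨F, hF1, hF2⟩ := hfirst
    have hFq : F < q := by
      rcases Nat.lt_or_ge F q with h | h
      · exact h
      · exfalso
        have : F = q := by omega
        rw [this] at hF2
        exact hbx hF2.symm
    set t : Finset ℕ := (Finset.range S.length).filter (fun j => d S j = b) with ht
    have htne : t.Nonempty := ⟨q+1, Finset.mem_filter.2 ⟨Finset.mem_range.2 hq1len, rfl⟩⟩
    obtain ⟨Last, hLmem, hLmax⟩ : ∃ m ∈ t, ∀ x ∈ t, x ≤ m :=
      ⟨t.max' htne, t.max'_mem htne, fun x hx => Finset.le_max' t x hx⟩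
    rw [ht, Finset.mem_filter, Finset.mem_range] at hLmem
    obtain ⟨hLlen, hLb⟩ := hLmem
    have hLge : q + 1 ≤ Last := hLmax (q+1)
      (Finset.mem_filter.2 ⟨Finset.mem_range.2 hq1len, rfl⟩)
    rcases Nat.lt_or_ge Last q' with hcase | hcase
    · refine ⟨Last, by omega, hcase, ⟨hLlen, Or.inr ?_⟩, hLb⟩
      intro j hj hLj hdj
      rw [hLb] at hdj
      have : j ∈ t := Finset.mem_filter.2 ⟨Finset.mem_range.2 hj, hdj⟩
      have := hLmax j this
      omega
    · exfalso
      have hLne : Last ≠ q' := by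
        intro h
        rw [h, ← hsym] at hLb
        exact hbx hLb.symm
      have hLgt : q' < Last := by omega
      apply halt
      refine ⟨b, d S q, hbx, ?_⟩
      have : altList b (d S q) 5 = [b, d S q, b, d S q, b] := rfl
      rw [this]
      have := sublist5 (S := S) hFq (by omega : q < q+1) hq1 hLgt hLlen
      rw [hF2, ← hsym, ← hb, hLb] at this
      exact this

end ds

section del
variable {S : List ℕ} {ℓ : ℕ}

/-- greatest `j < i` with the same symbol as `i` (0 if none) -/
def qm (S : List ℕ) (i : ℕ) : ℕ :=
  (((Finset.range i).filter (fun j => d S j = d S i)).max).unbotD 0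

def wp (S : List ℕ) (i : ℕ) : ℕ := qm S i + 1

def psym (S : List ℕ) (ℓ i : ℕ) : ℕ :=
  (((SpecI S ℓ (g S ℓ i)).filter (fun p => d S p = d S (wp S i))).max).unbotD 0

def pble (S : List ℕ) (ℓ i : ℕ) : ℕ :=
  (((SpecI S ℓ (g S ℓ i)).filter (fun p => p ≤ wp S i)).max).unbotD 0

lemma max_unbot_spec {s : Finset ℕ} (h : s.Nonempty) :
    (s.max).unbotD 0 ∈ s ∧ ∀ x ∈ s, x ≤ (s.max).unbotD 0 := by
  have h1 : ((s.max' h : ℕ) : WithBot ℕ) = s.max := Finset.coe_max' h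
  have h2 : (s.max).unbotD 0 = s.max' h := by rw [← h1]; rfl
  rw [h2]
  exact ⟨s.max'_mem h, fun x hx => Finset.le_max' s x hx⟩

lemma qm_spec {i : ℕ} (h : ∃ j < i, d S j = d S i) :
    qm S i < i ∧ d S (qm S i) = d S i ∧ ∀ j < i, d S j = d S i → j ≤ qm S i := by
  obtain ⟨j, hj, hdj⟩ := h
  set s := (Finset.range i).filter (fun j => d S j = d S i) with hs
  have hne : s.Nonempty := ⟨j, Finset.mem_filter.2 ⟨Finset.mem_range.2 hj, hdj⟩⟩
  obtain ⟨hmem, hmax⟩ := max_unbot_spec hne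
  rw [hs, Finset.mem_filter, Finset.mem_range] at hmem
  exact ⟨hmem.1, hmem.2, fun j' hj' hdj' =>
    hmax j' (Finset.mem_filter.2 ⟨Finset.mem_range.2 hj', hdj'⟩)⟩

/-- structural facts about an `A`-deleted position -/
lemma del_struct (hch : List.Chain' (· ≠ ·) S) (halt : ¬ HasAlt S 5)
    {i : ℕ} (hi : i < S.length) (hnk : ¬ keepA S ℓ i) :
    qm S i < i ∧ d S (qm S i) = d S i ∧ (∀ j < i, d S j = d S i → j ≤ qm S i) ∧
    wp S i ≤ i ∧ g S ℓ (wp S i) = g S ℓ i ∧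
    psym S ℓ i ∈ SpecI S ℓ (g S ℓ i) ∧ d S (psym S ℓ i) = d S (wp S i) ∧
    pble S ℓ i ∈ SpecI S ℓ (g S ℓ i) ∧ pble S ℓ i ≤ wp S i ∧
    (∀ x ∈ SpecI S ℓ (g S ℓ i), x ≤ wp S i → x ≤ pble S ℓ i) := by
  unfold keepA at hnk
  push_neg at hnk
  obtain ⟨j, hj, hgj, hdj⟩ := hnk
  obtain ⟨hq1, hq2, hq3⟩ := qm_spec ⟨j, hj, hdj⟩
  have hjq : j ≤ qm S i := hq3 j hj hdj
  have hgq : g S ℓ (qm S i) = g S ℓ i := g_squeeze hjq (le_of_lt hq1) hgj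
  have hwp : wp S i ≤ i := hq1
  have hwplen : wp S i < S.length := lt_of_le_of_lt hwp hi
  have hgw : g S ℓ (wp S i) = g S ℓ i := g_squeeze (Nat.le_succ _) hwp hgq
  -- psym
  obtain ⟨p, hp1, hp2, hp3, hp4⟩ := exists_special_between hch halt hq1 hi hq2
  have hgp : g S ℓ p = g S ℓ i := g_squeeze (le_of_lt hp1) (le_of_lt hp2) hgq
  have hpmem : p ∈ (SpecI S ℓ (g S ℓ i)).filter (fun p => d S p = d S (wp S i)) := by
    refine Finset.mem_filter.2 ⟨Finset.mem_filter.2 ⟨mem_Specials.2 hp3, hgp⟩, hp4⟩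
  obtain ⟨hsm, _⟩ := max_unbot_spec ⟨p, hpmem⟩
  have hsm' := Finset.mem_filter.1 hsm
  -- pble
  obtain ⟨p0, hp01, hp02, hp03⟩ := exists_special_le hwplen
  have hgp0 : g S ℓ p0 = g S ℓ i := by
    have : g S ℓ p0 = g S ℓ (wp S i) := by unfold g; rw [hp03]
    rw [this, hgw]
  have hp0mem : p0 ∈ (SpecI S ℓ (g S ℓ i)).filter (fun p => p ≤ wp S i) :=
    Finset.mem_filter.2 ⟨Finset.mem_filter.2 ⟨mem_Specials.2 hp02, hgp0⟩, hp01⟩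
  obtain ⟨hbm, hbmax⟩ := max_unbot_spec ⟨p0, hp0mem⟩
  have hbm' := Finset.mem_filter.1 hbm
  exact ⟨hq1, hq2, hq3, hwp, hgw, hsm'.1, hsm'.2, hbm'.1, hbm'.2,
    fun x hx hxle => hbmax x (Finset.mem_filter.2 ⟨hx, hxle⟩)⟩

lemma pble_lt (hch : List.Chain' (· ≠ ·) S) (halt : ¬ HasAlt S 5)
    {i i' : ℕ} (hi : i < S.length) (hi' : i' < S.length)
    (hnk : ¬ keepA S ℓ i) (hnk' : ¬ keepA S ℓ i') (hg : g S ℓ i = g S ℓ i')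
    (hlt : wp S i < wp S i') (hb : d S (wp S i) = d S (wp S i')) :
    pble S ℓ i < pble S ℓ i' := by
  obtain ⟨_, _, _, hwp, hgw, _, _, _, hple, _⟩ := del_struct hch halt hi hnk
  obtain ⟨_, _, _, hwp', hgw', _, _, _, _, hpmax'⟩ := del_struct hch halt hi' hnk'
  -- greatest occurrence of b below wp i'
  set b := d S (wp S i) with hbdef
  set t := (Finset.range (wp S i')).filter (fun j => d S j = b) with ht
  have htne : t.Nonempty := ⟨wp S i, Finset.mem_filter.2 ⟨Finset.mem_range.2 hlt, rfl⟩⟩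
  obtain ⟨hqm, hqmax⟩ := max_unbot_spec htne
  set q2 := (t.max).unbotD 0 with hq2def
  rw [ht, Finset.mem_filter, Finset.mem_range] at hqm
  obtain ⟨hq2lt, hq2b⟩ := hqm
  have hq2ge : wp S i ≤ q2 := hqmax (wp S i)
    (Finset.mem_filter.2 ⟨Finset.mem_range.2 hlt, rfl⟩)
  have hwplen' : wp S i' < S.length := lt_of_le_of_lt hwp' hi'
  obtain ⟨p, hp1, hp2, hp3, _⟩ := exists_special_between hch halt hq2lt hwplen'
    (by rw [hq2b, hb])
  have hgp : g S ℓ p = g S ℓ i' := by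
    apply g_squeeze (q := wp S i) _ _ _
    · omega
    · exact le_trans (le_of_lt hp2) hwp'
    · rw [hgw, hg]
  have hpmem : p ∈ SpecI S ℓ (g S ℓ i') :=
    Finset.mem_filter.2 ⟨mem_Specials.2 hp3, hgp⟩
  have := hpmax' p hpmem (le_of_lt hp2)
  calc pble S ℓ i ≤ wp S i := hple
    _ < p := by omega
    _ ≤ pble S ℓ i' := this

lemma card_del (hch : List.Chain' (· ≠ ·) S) (halt : ¬ HasAlt S 5) (k : ℕ) :
    ((Finset.range S.length).filter (fun i => ¬ keepA S ℓ i ∧ g S ℓ i = k)).card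
      ≤ (SpecI S ℓ k).card * (SpecI S ℓ k).card := by
  rw [← Finset.card_product]
  apply Finset.card_le_card_of_injOn (fun i => (psym S ℓ i, pble S ℓ i))
  · intro i hi
    simp only [Finset.mem_coe, Finset.mem_filter, Finset.mem_range] at hi
    obtain ⟨hilen, hnk, hgi⟩ := hi
    obtain ⟨_, _, _, _, _, hs1, _, hb1, _, _⟩ := del_struct hch halt hilen hnk
    rw [hgi] at hs1 hb1
    exact Finset.mem_product.2 ⟨hs1, hb1⟩
  · intro i hi i' hi' heq
    simp only [Finset.mem_coe, Finset.mem_filter, Finset.coe_filter, Set.mem_setOf_eq, Finset.mem_range] at hi hi'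
    obtain ⟨hilen, hnk, hgi⟩ := hi
    obtain ⟨hilen', hnk', hgi'⟩ := hi'
    have hgg : g S ℓ i = g S ℓ i' := by rw [hgi, hgi']
    have hps : psym S ℓ i = psym S ℓ i' := congrArg Prod.fst heq
    have hpb : pble S ℓ i = pble S ℓ i' := congrArg Prod.snd heq
    obtain ⟨hq1, hq2, hq3, _, _, _, hsd, _, _, _⟩ := del_struct hch halt hilen hnk
    obtain ⟨hq1', hq2', hq3', _, _, _, hsd', _, _, _⟩ := del_struct hch halt hilen' hnk'
    have hb : d S (wp S i) = d S (wp S i') := by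
      have h1 : psym S ℓ i = psym S ℓ i' := hps
      calc d S (wp S i) = d S (psym S ℓ i) := hsd.symm
        _ = d S (psym S ℓ i') := by rw [h1]
        _ = d S (wp S i') := hsd'
    rcases lt_trichotomy (wp S i) (wp S i') with hw | hw | hw
    · exact absurd hpb (Nat.ne_of_lt (pble_lt hch halt hilen hilen' hnk hnk' hgg hw hb))
    · -- wp equal → qm equal → symbols equal → i = i'
      have hqeq : qm S i = qm S i' := by unfold wp at hw; omega
      have hdd : d S i = d S i' := by
        calc d S i = d S (qm S i) := hq2.symm
          _ = d S (qm S i') := by rw [hqeq]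
          _ = d S i' := hq2'
      rcases lt_trichotomy i i' with h | h | h
      · have := hq3' i h hdd
        omega
      · exact h
      · have := hq3 i' h hdd.symm
        omega
    · exact absurd hpb.symm
        (Nat.ne_of_lt (pble_lt hch halt hilen' hilen hnk' hnk hgg.symm hw hb.symm))

end del

section lastS
variable {S : List ℕ} {ℓ : ℕ}

lemma lastS_succ (i : ℕ) :
    lastS S ℓ (i+1) = if keepP S ℓ i then some (d S i) else lastS S ℓ i := by
  rfl

lemma lastS_of_keep {j i : ℕ} (hj : keepP S ℓ j) (hji : j < i)
    (hgap : ∀ r, j < r → r < i → ¬ keepP S ℓ r) : lastS S ℓ i = some (d S j) := by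
  induction i with
  | zero => omega
  | succ i ih =>
    rcases Nat.lt_or_ge j i with h | h
    · rw [lastS_succ, if_neg (hgap i h (Nat.lt_succ_self i))]
      exact ih h (fun r h1 h2 => hgap r h1 (by omega))
    · have : j = i := by omega
      subst this
      rw [lastS_succ, if_pos hj]

lemma lastS_eq_some {i c : ℕ} (h : lastS S ℓ i = some c) :
    ∃ j, j < i ∧ keepP S ℓ j ∧ d S j = c ∧ ∀ r, j < r → r < i → ¬ keepP S ℓ r := by
  induction i with
  | zero => simp [lastS] at h
  | succ i ih =>
    rw [lastS_succ] at h
    by_cases hk : keepP S ℓ i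
    · rw [if_pos hk] at h
      exact ⟨i, Nat.lt_succ_self i, hk, Option.some_inj.1 h, fun r h1 h2 => by omega⟩
    · rw [if_neg hk] at h
      obtain ⟨j, h1, h2, h3, h4⟩ := ih h
      refine ⟨j, by omega, h2, h3, fun r hr1 hr2 => ?_⟩
      rcases Nat.lt_or_ge r i with h' | h'
      · exact h4 r hr1 h'
      · have : r = i := by omega
        subst this; exact hk

lemma card_B (k : ℕ) :
    ((Finset.range S.length).filter
      (fun i => keepA S ℓ i ∧ ¬ keepP S ℓ i ∧ g S ℓ i = k)).card ≤ 1 := by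
  rw [Finset.card_le_one]
  have key : ∀ i1 ∈ (Finset.range S.length).filter
      (fun i => keepA S ℓ i ∧ ¬ keepP S ℓ i ∧ g S ℓ i = k),
      ∀ i2 ∈ (Finset.range S.length).filter
      (fun i => keepA S ℓ i ∧ ¬ keepP S ℓ i ∧ g S ℓ i = k), i1 < i2 → False := by
    intro i1 h1 i2 h2 hlt
    simp only [Finset.mem_filter, Finset.mem_range] at h1 h2
    obtain ⟨hl1, hA1, hP1, hg1⟩ := h1
    obtain ⟨hl2, hA2, hP2, hg2⟩ := h2
    have hsome2 : lastS S ℓ i2 = some (d S i2) := by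
      unfold keepP at hP2
      push_neg at hP2
      exact hP2 hA2
    obtain ⟨j2, hj2lt, hj2k, hj2d, hj2gap⟩ := lastS_eq_some hsome2
    have hgj2 : g S ℓ j2 < k := by
      rcases Nat.lt_or_ge (g S ℓ j2) k with h | h
      · exact h
      · exfalso
        have : g S ℓ j2 = k := le_antisymm (hg2 ▸ g_mono (le_of_lt hj2lt)) h
        exact hA2 j2 hj2lt (by rw [this, hg2]) hj2d
    have hj2i1 : j2 < i1 := by
      rcases Nat.lt_or_ge j2 i1 with h | h
      · exact h
      · exfalso
        have := g_mono (S := S) (ℓ := ℓ) h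
        omega
    have hsome1 : lastS S ℓ i1 = some (d S i1) := by
      unfold keepP at hP1
      push_neg at hP1
      exact hP1 hA1
    have hlast1 : lastS S ℓ i1 = some (d S j2) :=
      lastS_of_keep hj2k hj2i1 (fun r hr1 hr2 => hj2gap r hr1 (by omega))
    have hd : d S i1 = d S j2 := by
      rw [hsome1] at hlast1
      exact Option.some_inj.1 hlast1
    exact hA2 i1 hlt (by rw [hg1, hg2]) (by rw [hd, hj2d])
  intro a ha b hb
  rcases lt_trichotomy a b with h | h | h
  · exact absurd (key a ha b hb h) (fun x => x)
  · exact h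
  · exact absurd (key b hb a ha h) (fun x => x)

end lastS

section partition

lemma filter_key_lt {l : List ℕ} {key : ℕ → ℕ}
    (hmono : l.Pairwise (fun a b => key a ≤ key b)) (N : ℕ) :
    l.filter (fun i => decide (key i < N+1)) =
      l.filter (fun i => decide (key i < N)) ++ l.filter (fun i => decide (key i = N)) := by
  induction l with
  | nil => rfl
  | cons x xs ih =>
    rw [List.pairwise_cons] at hmono
    obtain ⟨hx, hxs⟩ := hmono
    rcases Nat.lt_trichotomy (key x) N with h | h | h
    · simp only [List.filter_cons, decide_eq_true_eq]
      rw [if_pos (by omega), if_pos h, if_neg (by omega)]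
      rw [List.cons_append]
      congr 1
      exact ih hxs
    · simp only [List.filter_cons, decide_eq_true_eq]
      rw [if_pos (by omega), if_neg (by omega), if_pos h]
      have h1 : xs.filter (fun i => decide (key i < N)) = [] := by
        rw [List.filter_eq_nil_iff]
        intro y hy
        have := hx y hy
        simp only [decide_eq_true_eq]
        omega
      have h2 : xs.filter (fun i => decide (key i < N+1)) =
          xs.filter (fun i => decide (key i = N)) := by
        apply List.filter_congr
        intro y hy
        have := hx y hy
        simp only [decide_eq_true_eq, decide_eq_decide]
        omega
      rw [h1, h2]
      rfl
    · simp only [List.filter_cons, decide_eq_true_eq]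
      rw [if_neg (by omega), if_neg (by omega), if_neg (by omega)]
      exact ih hxs

lemma partition_by_key {l : List ℕ} {key : ℕ → ℕ}
    (hmono : l.Pairwise (fun a b => key a ≤ key b)) (N : ℕ) (hN : ∀ a ∈ l, key a < N) :
    l = ((List.range N).map (fun k => l.filter (fun i => decide (key i = k)))).flatten := by
  have aux : ∀ M : ℕ, l.filter (fun i => decide (key i < M)) =
      ((List.range M).map (fun k => l.filter (fun i => decide (key i = k)))).flatten := by
    intro M
    induction M with
    | zero => simp
    | succ M ihM =>
      rw [List.range_succ, List.map_append, List.flatten_append, ← ihM, filter_key_lt hmono]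
      simp
  have h1 : l.filter (fun i => decide (key i < N)) = l := by
    apply List.filter_eq_self.2
    intro a ha
    simpa using hN a ha
  conv_lhs => rw [← h1]
  rw [aux N]

end partition

section idx
variable {S : List ℕ} {ℓ : ℕ}

lemma first_filtered {P : ℕ → Bool} {xs : List ℕ} (hxs : xs.Pairwise (· < ·)) {y : ℕ}
    (hy : (xs.filter P).head? = some y) :
    y ∈ xs ∧ P y = true ∧ ∀ r ∈ xs, r < y → ¬ (P r = true) := by
  induction xs with
  | nil => simp at hy
  | cons x xs ih =>
    rw [List.pairwise_cons] at hxs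
    rw [List.filter_cons] at hy
    by_cases hP : P x = true
    · rw [if_pos hP] at hy
      simp only [List.head?_cons, Option.some_inj] at hy
      subst hy
      refine ⟨List.mem_cons_self, hP, ?_⟩
      intro r hr hlt
      rcases List.mem_cons.1 hr with h | h
      · omega
      · have := hxs.1 r h
        omega
    · rw [if_neg hP] at hy
      obtain ⟨h1, h2, h3⟩ := ih hxs.2 hy
      refine ⟨List.mem_cons_of_mem _ h1, h2, ?_⟩
      intro r hr hlt
      rcases List.mem_cons.1 hr with h | h
      · subst h; exact hP
      · exact h3 r h hlt

lemma chain'_filter {P : ℕ → Bool} {R : ℕ → ℕ → Prop} {l : List ℕ}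
    (hl : l.Pairwise (· < ·))
    (h : ∀ a b, a ∈ l → b ∈ l → a < b → P a = true → P b = true →
      (∀ r, r ∈ l → a < r → r < b → ¬ (P r = true)) → R a b) :
    (l.filter P).Chain' R := by
  induction l with
  | nil => exact List.isChain_nil
  | cons x xs ih =>
    rw [List.pairwise_cons] at hl
    rw [List.filter_cons]
    have hwk : ∀ a b, a ∈ xs → b ∈ xs → a < b → P a = true → P b = true →
        (∀ r, r ∈ xs → a < r → r < b → ¬ (P r = true)) → R a b := by
      intro a b ha hb hab hpa hpb hgap
      apply h a b (List.mem_cons_of_mem _ ha) (List.mem_cons_of_mem _ hb) hab hpa hpb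
      intro r hr hr1 hr2
      rcases List.mem_cons.1 hr with h' | h'
      · subst h'
        have := hl.1 a ha
        omega
      · exact hgap r h' hr1 hr2
    by_cases hP : P x = true
    · rw [if_pos hP]
      show List.IsChain _ _
      rw [List.isChain_cons]
      constructor
      · intro y hy
        have hy' : (xs.filter P).head? = some y := hy
        obtain ⟨h1, h2, h3⟩ := first_filtered hl.2 hy'
        apply h x y (List.mem_cons_self) (List.mem_cons_of_mem _ h1)
          (hl.1 y h1) hP h2
        intro r hr hr1 hr2
        rcases List.mem_cons.1 hr with h' | h'
        · omega
        · exact h3 r h' hr2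
      · exact ih hl.2 hwk
    · rw [if_neg hP]
      exact ih hl.2 hwk

lemma idxs_pairwise : (idxs S ℓ).Pairwise (· < ·) :=
  List.Pairwise.sublist (List.filter_sublist) (List.pairwise_lt_range)

lemma mem_idxs {i : ℕ} : i ∈ idxs S ℓ ↔ i < S.length ∧ keepP S ℓ i := by
  simp [idxs, List.mem_filter]

lemma chain_S' (hch : List.Chain' (· ≠ ·) S) : List.Chain' (· ≠ ·) (S' S ℓ) := by
  show List.IsChain (· ≠ ·) ((idxs S ℓ).map (d S))
  rw [List.isChain_map]
  apply chain'_filter (List.pairwise_lt_range)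
  intro a b ha hb hab hpa hpb hgap
  rw [List.mem_range] at ha hb
  rw [decide_eq_true_eq] at hpa hpb
  have hgap' : ∀ r, a < r → r < b → ¬ keepP S ℓ r := by
    intro r h1 h2 hk
    exact hgap r (List.mem_range.2 (by omega)) h1 h2 (decide_eq_true hk)
  have hlast : lastS S ℓ b = some (d S a) := lastS_of_keep hpa hab hgap'
  intro hcontra
  exact hpb.2 (by rw [hlast, hcontra])

end idx

section blocks
variable {S : List ℕ} {ℓ : ℕ}

def K1 (S : List ℕ) (ℓ : ℕ) : ℕ := ((Specials S).card - 1) / ℓ + 1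

lemma g_lt_K1 (i : ℕ) : g S ℓ i < K1 S ℓ := by
  have h := cnt_le_T (S := S) i
  have : (cnt S i - 1) / ℓ ≤ ((Specials S).card - 1) / ℓ :=
    Nat.div_le_div_right (by omega)
  unfold g K1
  omega

lemma S'_sublist : (S' S ℓ).Sublist S := by
  have h1 : List.Sublist (idxs S ℓ) (List.range S.length) := List.filter_sublist
  have h2 := List.Sublist.map (d S) h1
  rwa [range_map_d] at h2

def blocks (S : List ℕ) (ℓ : ℕ) : List (List ℕ) :=
  (List.range (K1 S ℓ)).map
    (fun k => ((idxs S ℓ).filter (fun i => decide (g S ℓ i = k))).map (d S))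

lemma blocks_length : (blocks S ℓ).length = K1 S ℓ := by simp [blocks]

lemma blocks_flatten : (blocks S ℓ).flatten = S' S ℓ := by
  have hpart := partition_by_key (l := idxs S ℓ) (key := g S ℓ)
    (List.Pairwise.imp (fun h => g_mono (le_of_lt h)) idxs_pairwise) (K1 S ℓ)
    (fun a _ => g_lt_K1 a)
  show (blocks S ℓ).flatten = (idxs S ℓ).map (d S)
  conv_rhs => rw [hpart]
  rw [blocks, List.map_flatten, List.map_map]
  rfl

lemma idxs_nodup : (idxs S ℓ).Nodup :=
  List.Pairwise.imp (fun h => Nat.ne_of_lt h) idxs_pairwise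

lemma blocks_nodup : ∀ B ∈ blocks S ℓ, B.Nodup := by
  intro B hB
  rw [blocks, List.mem_map] at hB
  obtain ⟨k, _, rfl⟩ := hB
  apply List.Nodup.map_on
  · intro x hx y hy hxy
    rw [List.mem_filter] at hx hy
    obtain ⟨hx1, hx2⟩ := hx
    obtain ⟨hy1, hy2⟩ := hy
    rw [decide_eq_true_eq] at hx2 hy2
    have hkx := (mem_idxs.1 hx1).2.1
    have hky := (mem_idxs.1 hy1).2.1
    rcases Nat.lt_trichotomy x y with h | h | h
    · exact absurd hxy (hky x h (by rw [hx2, hy2]))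
    · exact h
    · exact absurd hxy.symm (hkx y h (by rw [hx2, hy2]))
  · exact List.Nodup.sublist (List.filter_sublist) idxs_nodup

end blocks

section count
variable {S : List ℕ} {ℓ : ℕ}

lemma list_card (L : ℕ) (P : ℕ → Prop) [DecidablePred P] :
    ((List.range L).filter (fun i => decide (P i))).length =
      ((Finset.range L).filter P).card := by
  induction L with
  | zero => simp
  | succ L ih =>
    rw [List.range_succ, List.filter_append, List.length_append, ih,
      Finset.range_add_one, Finset.filter_insert]
    by_cases h : P L
    · rw [if_pos h, Finset.card_insert_of_notMem (by simp)]
      simp [h]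
    · rw [if_neg h]
      simp [h]

lemma length_S'_eq : (S' S ℓ).length + ((Finset.range S.length).filter
    (fun i => ¬ keepP S ℓ i)).card = S.length := by
  have h1 : (S' S ℓ).length = ((Finset.range S.length).filter (keepP S ℓ)).card := by
    show ((idxs S ℓ).map (d S)).length = _
    rw [List.length_map]
    exact list_card S.length (keepP S ℓ)
  rw [h1, Finset.card_filter_add_card_filter_not, Finset.card_range]

lemma unkept_bound (hch : List.Chain' (· ≠ ·) S) (halt : ¬ HasAlt S 5) (hℓ : 1 ≤ ℓ) :
    ((Finset.range S.length).filter (fun i => ¬ keepP S ℓ i)).card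
      ≤ ℓ * (Specials S).card + K1 S ℓ := by
  classical
  set U := (Finset.range S.length).filter (fun i => ¬ keepP S ℓ i) with hU
  set A := (Finset.range S.length).filter (fun i => ¬ keepA S ℓ i) with hA
  set B := (Finset.range S.length).filter
    (fun i => keepA S ℓ i ∧ ¬ keepP S ℓ i) with hB
  have hsub : U ⊆ A ∪ B := by
    intro x hx
    simp only [hU, hA, hB, Finset.mem_filter, Finset.mem_union, Finset.mem_range] at *
    by_cases h : keepA S ℓ x
    · exact Or.inr ⟨hx.1, h, hx.2⟩
    · exact Or.inl ⟨hx.1, h⟩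
  have hAcard : A.card ≤ ℓ * (Specials S).card := by
    have hfib := Finset.card_eq_sum_card_fiberwise
      (f := g S ℓ) (s := A) (t := Finset.range (K1 S ℓ))
      (fun x _ => Finset.mem_range.2 (g_lt_K1 x))
    have hfib2 := Finset.card_eq_sum_card_fiberwise
      (f := g S ℓ) (s := Specials S) (t := Finset.range (K1 S ℓ))
      (fun x _ => Finset.mem_range.2 (g_lt_K1 x))
    rw [hfib]
    have hstep : ∀ k ∈ Finset.range (K1 S ℓ),
        (A.filter (fun i => g S ℓ i = k)).card
          ≤ ℓ * ((Specials S).filter (fun p => g S ℓ p = k)).card := by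
      intro k _
      have h1 : A.filter (fun i => g S ℓ i = k) =
          (Finset.range S.length).filter (fun i => ¬ keepA S ℓ i ∧ g S ℓ i = k) := by
        rw [hA, Finset.filter_filter]
      rw [h1]
      calc ((Finset.range S.length).filter
            (fun i => ¬ keepA S ℓ i ∧ g S ℓ i = k)).card
          ≤ (SpecI S ℓ k).card * (SpecI S ℓ k).card := card_del hch halt k
        _ ≤ ℓ * (SpecI S ℓ k).card :=
            Nat.mul_le_mul_right _ (SpecI_card hℓ k)
        _ = ℓ * ((Specials S).filter (fun p => g S ℓ p = k)).card := rfl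
    calc ∑ k ∈ Finset.range (K1 S ℓ), (A.filter (fun i => g S ℓ i = k)).card
        ≤ ∑ k ∈ Finset.range (K1 S ℓ),
            ℓ * ((Specials S).filter (fun p => g S ℓ p = k)).card :=
          Finset.sum_le_sum hstep
      _ = ℓ * ∑ k ∈ Finset.range (K1 S ℓ),
            ((Specials S).filter (fun p => g S ℓ p = k)).card := by
          rw [Finset.mul_sum]
      _ = ℓ * (Specials S).card := by rw [← hfib2]
  have hBcard : B.card ≤ K1 S ℓ := by
    have hfib := Finset.card_eq_sum_card_fiberwise
      (f := g S ℓ) (s := B) (t := Finset.range (K1 S ℓ))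
      (fun x _ => Finset.mem_range.2 (g_lt_K1 x))
    rw [hfib]
    calc ∑ k ∈ Finset.range (K1 S ℓ), (B.filter (fun i => g S ℓ i = k)).card
        ≤ ∑ _k ∈ Finset.range (K1 S ℓ), 1 := by
          apply Finset.sum_le_sum
          intro k _
          have h1 : B.filter (fun i => g S ℓ i = k) =
              (Finset.range S.length).filter
                (fun i => keepA S ℓ i ∧ ¬ keepP S ℓ i ∧ g S ℓ i = k) := by
            rw [hB, Finset.filter_filter]
            congr 1
            ext i
            tauto
          rw [h1]
          exact card_B k
      _ = K1 S ℓ := by simp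
  calc U.card ≤ (A ∪ B).card := Finset.card_le_card hsub
    _ ≤ A.card + B.card := Finset.card_union_le _ _
    _ ≤ ℓ * (Specials S).card + K1 S ℓ := by omega

end count

section lone
variable {S : List ℕ}

lemma keepA_all_one (hch : List.Chain' (· ≠ ·) S) (halt : ¬ HasAlt S 5)
    {i : ℕ} (hi : i < S.length) : keepA S 1 i := by
  by_contra hnk
  unfold keepA at hnk
  push_neg at hnk
  obtain ⟨j, hj, hgj, hdj⟩ := hnk
  obtain ⟨hq1, hq2, hq3⟩ := qm_spec ⟨j, hj, hdj⟩
  have hjq : j ≤ qm S i := hq3 j hj hdj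
  have hgq : g S 1 (qm S i) = g S 1 i := g_squeeze hjq (le_of_lt hq1) hgj
  obtain ⟨p, hp1, hp2, hp3, _⟩ := exists_special_between hch halt hq1 hi hq2
  have hgp : g S 1 p = g S 1 i := g_squeeze (le_of_lt hp1) (le_of_lt hp2) hgq
  obtain ⟨p0, hp01, hp02, hp03⟩ := exists_special_le (lt_trans hq1 hi)
  have hgp0 : g S 1 p0 = g S 1 i := by
    have h1 : g S 1 p0 = g S 1 (qm S i) := by unfold g; rw [hp03]
    rw [h1, hgq]
  have hmem1 : p ∈ SpecI S 1 (g S 1 i) :=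
    Finset.mem_filter.2 ⟨mem_Specials.2 hp3, hgp⟩
  have hmem0 : p0 ∈ SpecI S 1 (g S 1 i) :=
    Finset.mem_filter.2 ⟨mem_Specials.2 hp02, hgp0⟩
  have hne : p0 ≠ p := by omega
  have : 1 < (SpecI S 1 (g S 1 i)).card :=
    Finset.one_lt_card.2 ⟨p0, hmem0, p, hmem1, hne⟩
  have := SpecI_card (S := S) (le_refl 1) (g S 1 i)
  omega

lemma keepP_all_one (hch : List.Chain' (· ≠ ·) S) (halt : ¬ HasAlt S 5) :
    ∀ i < S.length, keepP S 1 i := by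
  intro i
  induction i with
  | zero =>
    intro h
    refine ⟨keepA_all_one hch halt h, ?_⟩
    show lastS S 1 0 ≠ some (d S 0)
    simp [lastS]
  | succ i ih =>
    intro h
    have hik : keepP S 1 i := ih (by omega)
    have hlast : lastS S 1 (i+1) = some (d S i) := by
      rw [lastS_succ, if_pos hik]
    refine ⟨keepA_all_one hch halt h, ?_⟩
    rw [hlast]
    intro hcontra
    exact adj_ne hch h (Option.some_inj.1 hcontra)

end lone

section final

lemma psi_bddAbove (m n : ℕ) : BddAbove {L | ∃ S : List ℕ, IsDS 3 S ∧
    S.toFinset.card ≤ n ∧ HasBlocks S m ∧ S.length = L} := by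
  refine ⟨m * n, ?_⟩
  rintro L ⟨S, _, hcard, ⟨Bs, hBlen, hBflat, hBnodup⟩, rfl⟩
  rw [hBflat, List.length_flatten]
  have hB : ∀ x ∈ Bs.map List.length, x ≤ n := by
    intro x hx
    rw [List.mem_map] at hx
    obtain ⟨B, hB, rfl⟩ := hx
    have hnd := hBnodup B hB
    have hsubset : B.toFinset ⊆ S.toFinset := by
      intro a ha
      rw [List.mem_toFinset] at *
      rw [hBflat]
      exact List.mem_flatten.2 ⟨B, hB, ha⟩
    calc B.length = B.toFinset.card := (List.toFinset_card_of_nodup hnd).symm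
      _ ≤ S.toFinset.card := Finset.card_le_card hsubset
      _ ≤ n := hcard
  calc (Bs.map List.length).sum ≤ (Bs.map List.length).length • n :=
        List.sum_le_card_nsmul _ n hB
    _ = Bs.length * n := by simp [smul_eq_mul]
    _ ≤ m * n := Nat.mul_le_mul_right n hBlen

lemma main_est (n ℓ : ℕ) (hℓ : 1 ≤ ℓ) (hln : ℓ ≤ n) (hn : 1 ≤ n)
    (S : List ℕ) (hDS : IsDS 3 S) (hcard : S.toFinset.card ≤ n) :
    S.length ≤ psiDS 3 ((2 * n + ℓ - 1) / ℓ) n + 3 * n * ℓ := by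
  obtain ⟨hch, halt⟩ := hDS
  have halt5 : ¬ HasAlt S 5 := halt
  by_cases hlen : S.length = 0
  · rw [hlen]; exact Nat.zero_le _
  have hlen0 : 0 < S.length := Nat.pos_of_ne_zero hlen
  set m := (2 * n + ℓ - 1) / ℓ with hm
  -- facts about T
  have hT1 : 1 ≤ (Specials S).card :=
    Finset.card_pos.2 ⟨0, mem_Specials.2 (special_zero hlen0)⟩
  have hT2 : (Specials S).card ≤ 2 * n := le_trans (T_le S) (by omega)
  -- number of blocks
  have hK1m : K1 S ℓ ≤ m := by
    rw [hm]
    unfold K1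
    have h1 : ((Specials S).card - 1) / ℓ + 1 = ((Specials S).card - 1 + ℓ) / ℓ :=
      (Nat.add_div_right _ (by omega)).symm
    rw [h1]
    apply Nat.div_le_div_right
    omega
  -- S' is a DS sequence on ≤ n symbols with ≤ m blocks
  have hsub : (S' S ℓ).Sublist S := S'_sublist
  have hDS' : IsDS 3 (S' S ℓ) := by
    refine ⟨chain_S' hch, ?_⟩
    rintro ⟨a, b, hab, hsl⟩
    exact halt ⟨a, b, hab, hsl.trans hsub⟩
  have hcard' : (S' S ℓ).toFinset.card ≤ n := by
    apply le_trans _ hcard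
    apply Finset.card_le_card
    intro a ha
    rw [List.mem_toFinset] at *
    exact hsub.subset ha
  have hblocks : HasBlocks (S' S ℓ) m :=
    ⟨blocks S ℓ, by rw [blocks_length]; exact hK1m, blocks_flatten.symm, blocks_nodup⟩
  have hpsi : (S' S ℓ).length ≤ psiDS 3 m n := by
    apply le_csSup (psi_bddAbove m n)
    exact ⟨S' S ℓ, hDS', hcard', hblocks, rfl⟩
  have hcount := length_S'_eq (S := S) (ℓ := ℓ)
  by_cases hℓ1 : ℓ = 1
  · -- no deletions at all
    subst hℓ1
    have hempty : ((Finset.range S.length).filter (fun i => ¬ keepP S 1 i)) = ∅ := by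
      rw [Finset.filter_eq_empty_iff]
      intro i hi
      rw [Finset.mem_range] at hi
      simp only [not_not]
      exact keepP_all_one hch halt5 i hi
    rw [hempty, Finset.card_empty] at hcount
    omega
  · have hℓ2 : 2 ≤ ℓ := by omega
    have hunkept := unkept_bound hch halt5 hℓ
    have hK1n : K1 S ℓ ≤ n := by
      unfold K1
      have h1 : ((Specials S).card - 1) / ℓ + 1 = ((Specials S).card - 1 + ℓ) / ℓ :=
        (Nat.add_div_right _ (by omega)).symm
      rw [h1]
      rw [Nat.div_le_iff_le_mul_add_pred (by omega)]
      have : 2 * n ≤ ℓ * n := Nat.mul_le_mul_right n hℓ2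
      omega
    have hTbound : ℓ * (Specials S).card ≤ 2 * (n * ℓ) := by
      calc ℓ * (Specials S).card ≤ ℓ * (2 * n) := Nat.mul_le_mul_left ℓ hT2
        _ = 2 * (n * ℓ) := by ring
    have h3 : n ≤ n * ℓ := Nat.le_mul_of_pos_right n (by omega)
    have h3nl : 3 * n * ℓ = 3 * (n * ℓ) := by ring
    omega

end final

end DS3proof

/-- For all `n ≥ 1` and `1 ≤ ℓ ≤ n`, `λ_3(n) ≤ ψ_3(⌈2n/ℓ⌉, n) + 3·n·ℓ`. -/
theorem lambda3_to_psi3 :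
    ∀ n ℓ : ℕ, 1 ≤ ℓ → ℓ ≤ n →
      lambdaDS 3 n ≤ psiDS 3 ((2 * n + ℓ - 1) / ℓ) n + 3 * n * ℓ := by
  intro n ℓ h1 h2
  apply csSup_le'
  rintro L ⟨S, hDS, hcard, rfl⟩
  exact DS3proof.main_est n ℓ h1 h2 (le_trans h1 h2) S hDS hcard
end
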